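/- Let k be a perfect field, K a finite Galois extension of k, and F/K an algebraic function field of one variable with full constant field K, with x ∈ F transcendental over K. Suppose F/k(x) is an abelian Galois extension with Galois group 𝒢. If Γ = Gal(K/k) is cyclic of prime order p and G = Gal(F/K(x)) has order m with gcd(m, p) = 1, then the descent of the definition field of F from K to k is possible. -/

import Mathlib

open IntermediateField

/-- Any element of the base field image fixed by all automorphisms of a finite Galois
extension lies in the bottom field. -/
theorem aux_fixed_all_mem_bot {E F : Type*} [Field E] [Field F] [Algebra E F]
    [FiniteDimensional E F] [IsGalois E F] {y : F}
    (h : ∀ σ : F ≃ₐ[E] F, σ y = y) : ∃ e : E, algebraMap E F e = y := by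
  have h1 : IntermediateField.fixingSubgroup (⊥ : IntermediateField E F) = ⊤ := by
    ext σ
    simp only [Subgroup.mem_top, iff_true]
    show σ ∈ _root_.fixingSubgroup (F ≃ₐ[E] F) ((⊥ : IntermediateField E F) : Set F)
    rw [mem_fixingSubgroup_iff]
    rintro z hz
    rw [SetLike.mem_coe, IntermediateField.mem_bot] at hz
    obtain ⟨e, rfl⟩ := hz
    exact σ.commutes e
  have h2 : IntermediateField.fixedField (⊤ : Subgroup (F ≃ₐ[E] F)) = ⊥ := by
    rw [← h1, IsGalois.fixedField_fixingSubgroup]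
  have hy : y ∈ IntermediateField.fixedField (⊤ : Subgroup (F ≃ₐ[E] F)) := fun σ => h σ
  rw [h2, IntermediateField.mem_bot] at hy
  exact hy

/-- If the algebra map `k → K` is surjective then the automorphism group is trivial. -/
theorem aux_card_aut_one {k K : Type*} [Field k] [Field K] [Algebra k K]
    (hsurj : Function.Surjective (algebraMap k K)) :
    Nat.card (K ≃ₐ[k] K) = 1 := by
  have : ∀ τ : K ≃ₐ[k] K, τ = 1 := by
    intro τ
    ext c
    obtain ⟨a, rfl⟩ := hsurj c
    exact τ.commutes a
  haveI : Subsingleton (K ≃ₐ[k] K) := ⟨fun a b => (this a).trans (this b).symm⟩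
  exact Nat.card_unique

/-- "Fact A": the algebraic closure of `k` in `k(x)` is `k`, in the form we need. -/
theorem aux_factA {k K F : Type*} [Field k] [Field K] [Field F]
    [Algebra k K] [Algebra k F] [Algebra K F] [IsScalarTower k K F]
    {x : F} (hx : Transcendental K x) (c : K)
    (h : algebraMap K F c ∈ adjoin k {x}) : ∃ a : k, algebraMap k K a = c := by
  obtain ⟨r, s, hrs⟩ := (mem_adjoin_simple_iff k _).mp h
  by_cases hs : (Polynomial.aeval x) s = 0
  · rw [hs, div_zero] at hrs
    refine ⟨0, ?_⟩
    rw [map_zero]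
    exact ((algebraMap K F).injective (by rw [hrs, map_zero])).symm
  · have key : (Polynomial.aeval x)
        (Polynomial.C c * s.map (algebraMap k K) - r.map (algebraMap k K)) = 0 := by
      rw [map_sub, map_mul, Polynomial.aeval_C, Polynomial.aeval_map_algebraMap,
        Polynomial.aeval_map_algebraMap, hrs, div_mul_cancel₀]
      · ring
      · exact hs
    have hP : Polynomial.C c * s.map (algebraMap k K) - r.map (algebraMap k K) = 0 := by
      by_contra hne
      exact hx ⟨_, hne, key⟩
    have hcs : ∀ i, c * algebraMap k K (s.coeff i) = algebraMap k K (r.coeff i) := by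
      intro i
      have h2 := congrArg (fun q => Polynomial.coeff q i) hP
      simpa [Polynomial.coeff_map, sub_eq_zero] using h2
    have hs0 : s ≠ 0 := fun h0 => hs (by rw [h0, map_zero])
    obtain ⟨i, hi⟩ : ∃ i, s.coeff i ≠ 0 := by
      by_contra hall
      push_neg at hall
      exact hs0 (Polynomial.ext fun n => by rw [hall n, Polynomial.coeff_zero])
    refine ⟨r.coeff i / s.coeff i, ?_⟩
    rw [map_div₀]
    rw [div_eq_iff (by simpa using hi), ← hcs i]

/-- Finite dimensionality of `F` over `k(x)` given finite dimensionality over `K(x)`. -/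
theorem aux_findim {k K F : Type*} [Field k] [Field K] [Field F]
    [Algebra k K] [Algebra k F] [Algebra K F] [IsScalarTower k K F]
    [FiniteDimensional k K] (x : F)
    (hFfin : FiniteDimensional (↥(adjoin K {x})) F) :
    FiniteDimensional (↥(adjoin k {x})) F := by
  classical
  obtain ⟨t, ht⟩ : ∃ t : Finset K, Algebra.adjoin k (t : Set K) = ⊤ :=
    (inferInstance : Algebra.FiniteType k K).out
  set W : IntermediateField (↥(adjoin k {x})) F :=
    IntermediateField.adjoin (↥(adjoin k {x})) (algebraMap K F '' (t : Set K)) with hW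
  have hint : ∀ z ∈ algebraMap K F '' (t : Set K), IsIntegral (↥(adjoin k {x})) z := by
    rintro z ⟨c, -, rfl⟩
    have h1 : IsIntegral k (algebraMap K F c) :=
      (IsIntegral.of_finite k c).map (IsScalarTower.toAlgHom k K F)
    exact h1.tower_top
  haveI : Finite ↥(algebraMap K F '' (t : Set K)) :=
    Set.Finite.to_subtype ((t : Set K).toFinite.image _)
  haveI hWfin : FiniteDimensional (↥(adjoin k {x})) ↥W :=
    IntermediateField.finiteDimensional_adjoin hint
  have hKW : ∀ c : K, algebraMap K F c ∈ W := by
    intro c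
    have hc : c ∈ Algebra.adjoin k (t : Set K) := ht ▸ Algebra.mem_top
    induction hc using Algebra.adjoin_induction with
    | mem z hz => exact IntermediateField.subset_adjoin _ _ ⟨z, hz, rfl⟩
    | algebraMap a =>
      rw [← IsScalarTower.algebraMap_apply k K F,
        IsScalarTower.algebraMap_apply k (↥(adjoin k {x})) F]
      exact W.algebraMap_mem _
    | add u v hu hv hu' hv' => rw [map_add]; exact W.add_mem hu' hv'
    | mul u v hu hv hu' hv' => rw [map_mul]; exact W.mul_mem hu' hv'
  have hxW : x ∈ W := by
    have := W.algebraMap_mem ⟨x, mem_adjoin_simple_self k x⟩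
    exact this
  have hadjKW : ∀ z, z ∈ adjoin K {x} → z ∈ W := by
    intro z hz
    have hle := IntermediateField.adjoin_le_subfield (K := W.toSubfield)
      (F := K) (S := ({x} : Set F)) ?_ ?_
    · exact (W.mem_toSubfield z).mp (hle ((mem_toSubfield _ z).mpr hz))
    · rintro _ ⟨c, rfl⟩
      exact (W.mem_toSubfield _).mpr (hKW c)
    · exact Set.singleton_subset_iff.mpr ((W.mem_toSubfield x).mpr hxW)
  -- now F is finite over W
  obtain ⟨s, hs⟩ : (⊤ : Submodule (↥(adjoin K {x})) F).FG := hFfin.fg_top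
  have hspan : Submodule.span ↥W (s : Set F) = ⊤ := by
    rw [eq_top_iff]
    rintro f -
    have hf : f ∈ Submodule.span (↥(adjoin K {x})) (s : Set F) := hs ▸ Submodule.mem_top
    induction hf using Submodule.span_induction with
    | mem z hz => exact Submodule.subset_span hz
    | zero => exact Submodule.zero_mem _
    | add u v hu hv hu' hv' => exact Submodule.add_mem _ hu' hv'
    | smul a z hz hz' =>
      have key : a • z = (⟨(a : F), hadjKW _ a.2⟩ : ↥W) • z := by
        rw [Algebra.smul_def, Algebra.smul_def]
        rfl
      rw [key]
      exact Submodule.smul_mem _ _ hz'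
  haveI : Module.Finite ↥W F := ⟨⟨s, hspan⟩⟩
  exact Module.Finite.trans ↥W F

/-- An automorphism of `F` over `k(x)` which fixes (the image of) `K` pointwise
fixes all of `K(x)` pointwise. -/
theorem aux_fix_adjoinKx {k K F : Type*} [Field k] [Field K] [Field F]
    [Algebra k K] [Algebra k F] [Algebra K F] [IsScalarTower k K F]
    (x : F) (σ : F ≃ₐ[↥(adjoin k {x})] F)
    (hσ : ∀ c : K, σ (algebraMap K F c) = algebraMap K F c) :
    ∀ z ∈ adjoin K {x}, σ z = z := by
  let S : Subfield F :=
  { carrier := {z | σ z = z}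
    one_mem' := map_one σ
    mul_mem' := fun {a b} ha hb => by
      show σ (a * b) = a * b
      rw [map_mul, show σ a = a from ha, show σ b = b from hb]
    zero_mem' := map_zero σ
    add_mem' := fun {a b} ha hb => by
      show σ (a + b) = a + b
      rw [map_add, show σ a = a from ha, show σ b = b from hb]
    neg_mem' := fun {a} ha => by
      show σ (-a) = -a
      rw [map_neg, show σ a = a from ha]
    inv_mem' := fun a ha => by
      show σ a⁻¹ = a⁻¹
      rw [map_inv₀, show σ a = a from ha] }
  have hle := IntermediateField.adjoin_le_subfield (K := S) (F := K) (S := ({x} : Set F))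
    (by rintro _ ⟨c, rfl⟩; exact hσ c)
    (by
      refine Set.singleton_subset_iff.mpr ?_
      show σ x = x
      exact σ.commutes ⟨x, mem_adjoin_simple_self k x⟩)
  intro z hz
  exact hle ((adjoin K {x}).mem_toSubfield z |>.mpr hz)

set_option maxHeartbeats 2000000
set_option synthInstance.maxHeartbeats 400000

/-- `k` perfect, `K/k` finite Galois, `F/K` an algebraic function field
of one variable with full constant field `K`, `x ∈ F` transcendental over `K`.
If `F/k(x)` is an abelian Galois extension, `Γ = Gal(K/k)` is cyclic of prime order `p`
and `G = Gal(F/K(x))` has order `m` with `gcd(m,p) = 1`, then the descent of the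
definition field of `F` from `K` to `k` is possible: there is a finite extension
`F'` of `k(x)` with full constant field `k` such that `F ≅ F' ⊗_k K` as `k`-algebras. -/
theorem stmt_1
    (k K F : Type) [Field k] [Field K] [Field F]
    [Algebra k K] [Algebra k F] [Algebra K F] [IsScalarTower k K F]
    [PerfectField k] [FiniteDimensional k K] [IsGalois k K]
    (x : F) (hx : Transcendental K x)
    (hFfin : FiniteDimensional (↥(adjoin K {x})) F)
    (hconstF : ∀ y : F, IsAlgebraic K y → ∃ c : K, algebraMap K F c = y)
    [IsGalois (↥(adjoin k {x})) F]
    (hab : ∀ a b : F ≃ₐ[↥(adjoin k {x})] F, a * b = b * a)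
    (p : ℕ) (hp : p.Prime) [IsCyclic (K ≃ₐ[k] K)] (hΓ : Nat.card (K ≃ₐ[k] K) = p)
    (m : ℕ) (hG : Nat.card (F ≃ₐ[↥(adjoin K {x})] F) = m) (hm : Nat.gcd m p = 1) :
    ∃ F' : IntermediateField (↥(adjoin k {x})) F,
      FiniteDimensional (↥(adjoin k {x})) (↥F') ∧
      (∀ y : F, y ∈ F' → IsAlgebraic k y → ∃ c : k, algebraMap k F c = y) ∧
      Nonempty (F ≃ₐ[k] TensorProduct k (↥F') K) := by
  classical
  haveI hEF : FiniteDimensional (↥(adjoin k {x})) F := aux_findim x hFfin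
  -- restriction homomorphism to `Gal(K/k)`
  have hcomm : ∀ (σ : F ≃ₐ[↥(adjoin k {x})] F) (c : K),
      algebraMap K F (((AlgEquiv.restrictScalars k σ).restrictNormal K) c)
        = σ (algebraMap K F c) :=
    fun σ c => AlgEquiv.restrictNormal_commutes _ K c
  set π : (F ≃ₐ[↥(adjoin k {x})] F) →* (K ≃ₐ[k] K) :=
    MonoidHom.mk' (fun σ => (AlgEquiv.restrictScalars k σ).restrictNormal K) (by
      intro σ τ
      ext c
      apply (algebraMap K F).injective
      rw [AlgEquiv.mul_apply, hcomm (σ * τ) c, AlgEquiv.mul_apply, hcomm σ, hcomm τ]) with hπ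
  have hπcomm : ∀ (σ : F ≃ₐ[↥(adjoin k {x})] F) (c : K),
      algebraMap K F (π σ c) = σ (algebraMap K F c) := hcomm
  have hker_iff : ∀ σ, σ ∈ π.ker ↔
      ∀ c : K, σ (algebraMap K F c) = algebraMap K F c := by
    intro σ
    rw [MonoidHom.mem_ker]
    constructor
    · intro h c
      rw [← hπcomm σ c, h]
      simp
    · intro h
      ext c
      apply (algebraMap K F).injective
      rw [hπcomm σ c, h c]
      simp
  -- the kernel is `Gal(F/K(x))`
  have hEKx : ∀ z : ↥(adjoin k {x}), (z : F) ∈ adjoin K {x} := by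
    have h1 : adjoin k {x} ≤ (adjoin K {x}).restrictScalars k :=
      adjoin_le_iff.mpr (Set.singleton_subset_iff.mpr (mem_adjoin_simple_self K x))
    exact fun z => h1 z.2
  let kerEquiv : π.ker ≃* (F ≃ₐ[↥(adjoin K {x})] F) :=
  { toFun := fun σ =>
      { (σ : F ≃ₐ[↥(adjoin k {x})] F).toRingEquiv with
        commutes' := fun z => by
          exact aux_fix_adjoinKx (k := k) (K := K) x σ ((hker_iff σ).mp σ.2) z z.2 }
    invFun := fun τ =>
      ⟨{ τ.toRingEquiv with
          commutes' := fun e => by exact τ.commutes ⟨(e : F), hEKx e⟩ },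
        (hker_iff _).mpr (fun c => by
          exact τ.commutes ⟨algebraMap K F c, (adjoin K {x}).algebraMap_mem c⟩)⟩
    left_inv := fun σ => Subtype.ext (by ext z; rfl)
    right_inv := fun τ => by ext z; rfl
    map_mul' := fun a b => by ext z; rfl }
  have hkercard : Nat.card π.ker = m := by
    rw [← hG]
    exact Nat.card_congr kerEquiv.toEquiv
  clear kerEquiv
  -- the image has order dividing `p`
  have hdvd : Nat.card π.range ∣ p := by
    rw [← hΓ]
    exact Subgroup.card_subgroup_dvd_card _
  rcases hp.eq_one_or_self_of_dvd _ hdvd with hcase | hcase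
  · -- degenerate case : contradiction
    exfalso
    rw [Subgroup.card_eq_one] at hcase
    have hfixall : ∀ (σ : F ≃ₐ[↥(adjoin k {x})] F) (c : K),
        σ (algebraMap K F c) = algebraMap K F c := by
      intro σ c
      have h1 : π σ ∈ π.range := ⟨σ, rfl⟩
      rw [hcase, Subgroup.mem_bot] at h1
      exact (hker_iff σ).mp h1 c
    have hsurj : Function.Surjective (algebraMap k K) := by
      intro c
      obtain ⟨e, he⟩ := aux_fixed_all_mem_bot (fun σ => hfixall σ c)
      exact aux_factA hx c (he ▸ e.2)
    have h1 := aux_card_aut_one hsurj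
    rw [hΓ] at h1
    exact hp.ne_one h1
  · -- main case
    have hrange : π.range = ⊤ := Subgroup.eq_top_of_card_eq _ (by rw [hcase, hΓ])
    have hπsurj : Function.Surjective π := MonoidHom.range_eq_top.mp hrange
    have hcardG : Nat.card (F ≃ₐ[↥(adjoin k {x})] F) = p * m := by
      rw [Subgroup.card_eq_card_quotient_mul_card_subgroup π.ker,
        Nat.card_congr (QuotientGroup.quotientKerEquivRange π).toEquiv, hcase, hkercard]
    -- the subgroup of elements of order dividing `p`
    let P : Subgroup (F ≃ₐ[↥(adjoin k {x})] F) :=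
    { carrier := {σ | σ ^ p = 1}
      one_mem' := one_pow p
      mul_mem' := fun {a b} ha hb => by
        have hc : Commute a b := hab a b
        show (a * b) ^ p = 1
        rw [hc.mul_pow, show a ^ p = 1 from ha, show b ^ p = 1 from hb, one_mul]
      inv_mem' := fun {a} ha => by
        show a⁻¹ ^ p = 1
        rw [inv_pow, show a ^ p = 1 from ha, inv_one] }
    have hPker : ∀ σ, σ ∈ P → σ ∈ π.ker → σ = 1 := by
      intro σ hσP hσK
      have h1 : σ ^ p = 1 := hσP
      have h2 : σ ^ m = 1 := by
        have h3 : (⟨σ, hσK⟩ : π.ker) ^ m = 1 := by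
          rw [← hkercard]; exact pow_card_eq_one'
        simpa using Subtype.ext_iff.mp h3
      have hd : orderOf σ ∣ Nat.gcd m p :=
        Nat.dvd_gcd (orderOf_dvd_of_pow_eq_one h2) (orderOf_dvd_of_pow_eq_one h1)
      rw [hm] at hd
      exact orderOf_eq_one_iff.mp (Nat.dvd_one.mp hd)
    have hPsurj : ∀ τ : K ≃ₐ[k] K, ∃ σ, σ ∈ P ∧ π σ = τ := by
      intro τ
      have cop : (Nat.card (K ≃ₐ[k] K)).Coprime m := by
        rw [hΓ]; exact Nat.Coprime.symm hm
      obtain ⟨τ₀, hτ₀⟩ := (powCoprime cop).surjective τ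
      obtain ⟨σ₀, hσ₀⟩ := hπsurj τ₀
      refine ⟨σ₀ ^ m, ?_, ?_⟩
      · show (σ₀ ^ m) ^ p = 1
        have h1 : σ₀ ^ (p * m) = 1 := by rw [← hcardG]; exact pow_card_eq_one'
        rw [← pow_mul, mul_comm m p, h1]
      · rw [map_pow, hσ₀]
        exact hτ₀
    have hPcard : Nat.card P = p := by
      rw [← hΓ]
      apply Nat.card_eq_of_bijective (fun σ : P => π σ)
      constructor
      · intro a b hab'
        have hab2 : π (a : F ≃ₐ[↥(adjoin k {x})] F) = π (b : F ≃ₐ[↥(adjoin k {x})] F) := hab'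
        have h1 : ((a : F ≃ₐ[↥(adjoin k {x})] F) * (b : F ≃ₐ[↥(adjoin k {x})] F)⁻¹)
            ∈ π.ker := by
          rw [MonoidHom.mem_ker, map_mul, map_inv, hab2, mul_inv_cancel]
        have h2 := hPker _ (P.mul_mem a.2 (P.inv_mem b.2)) h1
        rw [mul_inv_eq_one] at h2
        exact Subtype.ext h2
      · intro τ
        obtain ⟨σ, hσP, hσ⟩ := hPsurj τ
        exact ⟨⟨σ, hσP⟩, hσ⟩
    -- the fixed field of `P`
    set A : IntermediateField (↥(adjoin k {x})) F := IntermediateField.fixedField P with hA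
    have hfixA : ∀ σ ∈ P, ∀ z ∈ A, σ z = z := by
      intro σ hσ z hz
      exact hz ⟨σ, hσ⟩
    have hAK : ∀ c : K, algebraMap K F c ∈ A → ∃ a : k, algebraMap k K a = c := by
      intro c hc
      apply aux_fixed_all_mem_bot
      intro τ
      obtain ⟨σ, hσP, hσ⟩ := hPsurj τ
      apply (algebraMap K F).injective
      rw [← hσ, hπcomm σ c]
      exact hfixA σ hσP _ hc
    haveI hkAF : IsScalarTower k (↥A) F := IsScalarTower.of_algebraMap_eq fun a => by
      rw [IsScalarTower.algebraMap_apply k (↥(adjoin k {x})) F a,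
        IsScalarTower.algebraMap_apply (↥(adjoin k {x})) (↥A) F,
        IsScalarTower.algebraMap_apply k (↥(adjoin k {x})) (↥A) a]
    have hAF : Module.finrank ↥A F = p := by
      rw [hA, IntermediateField.finrank_fixedField_eq_card, hPcard]
    clear_value A
    clear hA

    -- primitive element of `K` over `k`
    haveI : Algebra.IsSeparable k K := IsGalois.to_isSeparable
    obtain ⟨c, hc⟩ := Field.exists_primitive_element k K
    have hpK : Module.finrank k K = p := by
      rw [← hΓ, IsGalois.card_aut_eq_finrank]
    have hcint : IsIntegral k c := IsIntegral.of_finite k c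
    set y : F := algebraMap K F c with hy
    have hyint : IsIntegral (↥A) y :=
      IsIntegral.tower_top (hcint.map (IsScalarTower.toAlgHom k K F))
    have hmul : Module.finrank ↥A ↥(adjoin ↥A {y}) * Module.finrank ↥(adjoin ↥A {y}) F
        = Module.finrank ↥A F := Module.finrank_mul_finrank _ _ _
    have hdvd2 : Module.finrank ↥A ↥(adjoin ↥A {y}) ∣ p := by
      refine ⟨Module.finrank ↥(adjoin ↥A {y}) F, ?_⟩
      rw [← hAF]
      exact hmul.symm
    rcases hp.eq_one_or_self_of_dvd _ hdvd2 with h1 | hdeg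
    · exfalso
      rw [IntermediateField.finrank_eq_one_iff] at h1
      have hyA : y ∈ A := by
        have h2 := mem_adjoin_simple_self (↥A) y
        rw [h1, IntermediateField.mem_bot] at h2
        obtain ⟨a₀, ha₀⟩ := h2
        exact ha₀ ▸ a₀.2
      obtain ⟨a, ha⟩ := hAK c hyA
      have hsurj : Function.Surjective (algebraMap k K) := by
        intro c'
        have hc' : c' ∈ (⊤ : IntermediateField k K) := trivial
        rw [← hc] at hc'
        have hcbot : (adjoin k {c} : IntermediateField k K) ≤ ⊥ := by
          rw [adjoin_le_iff]
          refine Set.singleton_subset_iff.mpr ?_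
          rw [SetLike.mem_coe, IntermediateField.mem_bot]
          exact ⟨a, ha⟩
        have h3 := hcbot hc'
        rw [IntermediateField.mem_bot] at h3
        exact h3
      have h2 := aux_card_aut_one hsurj
      rw [hΓ] at h2
      exact hp.ne_one h2
    · -- the power bases
      have hfr1 : Module.finrank ↥(adjoin ↥A {y}) F = 1 := by
        have h2 : p * Module.finrank ↥(adjoin ↥A {y}) F = p * 1 := by
          rw [mul_one]
          calc p * Module.finrank ↥(adjoin ↥A {y}) F
              = Module.finrank ↥A ↥(adjoin ↥A {y}) * Module.finrank ↥(adjoin ↥A {y}) F := by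
                rw [hdeg]
            _ = Module.finrank ↥A F := hmul
            _ = p := hAF
        exact Nat.eq_of_mul_eq_mul_left hp.pos h2
      have htop : adjoin ↥A {y} = ⊤ := by
        apply IntermediateField.eq_of_le_of_finrank_eq' le_top
        rw [hfr1, IntermediateField.finrank_top]
      let eF : ↥(adjoin ↥A {y}) ≃ₐ[↥A] F :=
        (IntermediateField.equivOfEq htop).trans IntermediateField.topEquiv
      let pbF : PowerBasis ↥A F := (IntermediateField.adjoin.powerBasis hyint).map eF
      have hgenF : pbF.gen = y := by
        simp only [pbF, PowerBasis.map_gen, IntermediateField.adjoin.powerBasis_gen]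
        rfl
      let eK : ↥(adjoin k {c}) ≃ₐ[k] K :=
        (IntermediateField.equivOfEq hc).trans IntermediateField.topEquiv
      let pbK : PowerBasis k K := (IntermediateField.adjoin.powerBasis hcint).map eK
      have hgenK : pbK.gen = c := by
        simp only [pbK, PowerBasis.map_gen, IntermediateField.adjoin.powerBasis_gen]
        rfl
      have hdimF : pbF.dim = p := by
        rw [← pbF.finrank]
        exact hAF
      have hdimK : pbK.dim = p := by
        rw [← pbK.finrank]
        exact hpK
      have hdims : pbK.dim = pbF.dim := by rw [hdimK, hdimF]
      let bT : Module.Basis (Fin pbK.dim) (↥A) (TensorProduct k (↥A) K) :=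
        Algebra.TensorProduct.basis (↥A) pbK.basis
      let f : ↥A →ₐ[k] F := IsScalarTower.toAlgHom k (↥A) F
      let g : K →ₐ[k] F := IsScalarTower.toAlgHom k K F
      let ψ : TensorProduct k (↥A) K →ₐ[k] F := Algebra.TensorProduct.productMap f g
      let ψl : TensorProduct k (↥A) K →ₗ[↥A] F :=
      { toFun := ψ
        map_add' := map_add ψ
        map_smul' := by
          intro a t
          show ψ (a • t) = a • ψ t
          induction t using TensorProduct.induction_on with
          | zero => rw [smul_zero, map_zero, smul_zero]
          | tmul u v =>
            rw [TensorProduct.smul_tmul']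
            show f (a • u) * g v = a • (f u * g v)
            rw [smul_eq_mul, map_mul, Algebra.smul_def, mul_assoc]
            rfl
          | add t1 t2 h1 h2 => rw [smul_add, map_add, h1, h2, map_add, smul_add] }
      have hbasis : ∀ i : Fin pbK.dim, ψ (bT i) = pbF.basis (finCongr hdims i) := by
        intro i
        simp only [bT]
        rw [Algebra.TensorProduct.basis_apply, PowerBasis.coe_basis, PowerBasis.coe_basis,
          hgenK, hgenF]
        show f 1 * g (c ^ (i : ℕ)) = y ^ ((finCongr hdims i : Fin pbF.dim) : ℕ)
        rw [map_one, one_mul, map_pow]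
        rfl
      have hψeq : ψl = (bT.equiv pbF.basis (finCongr hdims)).toLinearMap := by
        apply bT.ext
        intro i
        have h2 : (bT.equiv pbF.basis (finCongr hdims)).toLinearMap (bT i)
            = pbF.basis (finCongr hdims i) := by
          simp only [LinearEquiv.coe_coe, Module.Basis.equiv_apply]
        rw [h2]
        exact hbasis i
      have hbij : Function.Bijective ψ := by
        have h3 : ⇑ψ = ⇑(bT.equiv pbF.basis (finCongr hdims)) := by
          have h4 := congrArg DFunLike.coe hψeq
          exact h4
        rw [h3]
        exact (bT.equiv pbF.basis (finCongr hdims)).bijective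
      refine ⟨A, inferInstance, ?_, ⟨(AlgEquiv.ofBijective ψ hbij).symm⟩⟩
      intro y₀ hy₀ halg
      obtain ⟨c₀, hc₀⟩ := hconstF y₀ (halg.tower_top K)
      obtain ⟨a, ha⟩ := hAK c₀ (by rw [hc₀]; exact hy₀)
      exact ⟨a, by rw [IsScalarTower.algebraMap_apply k K F, ha, hc₀]⟩
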